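/- arXiv:2307.03431 — 7 statements merged into one kernel-verified Lean document; each statement's English description precedes it below -/
import Mathlib

section
/- Let r ∈ ℝ³ with ‖r‖ < 1 and set ρ := (1/2)(I + r·σ), a strictly positive 2×2 density matrix. For x ∈ ℝ³ define λ := (x·r)/(1−‖r‖²) and ℓ := x + λ r. Then the Hermitian matrix L := ℓ·σ − λ I satisfies ρ∘L = (1/2) x·σ and Tr(ρL) = 0; that is, L is the SLD of the tangent vector represented by (1/2)x·σ at ρ. -/
open Matrix
open scoped ComplexOrder

noncomputable section

/-- The symmetrized (Jordan) product `A∘B := (AB+BA)/2`. -/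
def jprod (A B : Matrix (Fin 2) (Fin 2) ℂ) : Matrix (Fin 2) (Fin 2) ℂ :=
  (1/2 : ℂ) • (A * B + B * A)

/-- The Pauli matrices. -/
def pauli : Fin 3 → Matrix (Fin 2) (Fin 2) ℂ
  | 0 => !![0, 1; 1, 0]
  | 1 => !![0, -Complex.I; Complex.I, 0]
  | 2 => !![1, 0; 0, -1]

/-- `a·σ` for `a ∈ ℝ³`. -/
def dotSigma (a : Fin 3 → ℝ) : Matrix (Fin 2) (Fin 2) ℂ := ∑ i, a i • pauli i

lemma dotSigma_eq (a : Fin 3 → ℝ) :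
    dotSigma a = !![(a 2 : ℂ), a 0 - a 1 * Complex.I; a 0 + a 1 * Complex.I, -(a 2 : ℂ)] := by
  ext i j
  fin_cases i <;> fin_cases j <;>
    · simp [dotSigma, pauli, Fin.sum_univ_three]
      try ring

lemma key (t u v p q c1 c2 : ℝ) (hp : 0 ≤ p) (hq : 0 ≤ q) (hpq : 0 < p + q)
    (hc : c1^2 + c2^2 = p*q) (hr : u^2+v^2+t^2 < 1) :
    0 < (1+t)*p + (1-t)*q + 2*(u*c1+v*c2) := by
  have ht1 : 0 < 1 + t := by nlinarith [sq_nonneg u, sq_nonneg v, sq_nonneg (1+t)]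
  have ht2 : 0 < 1 - t := by nlinarith [sq_nonneg u, sq_nonneg v, sq_nonneg (1-t)]
  have hS : 0 < (1+t)*p + (1-t)*q := by
    rcases lt_or_ge 0 p with h | h
    · nlinarith
    · nlinarith
  have h1 : (u*c1+v*c2)^2 ≤ (u^2+v^2)*(p*q) := by
    nlinarith [sq_nonneg (u*c2 - v*c1)]
  by_contra hcon
  push_neg at hcon
  have hC : u*c1+v*c2 ≤ -(((1+t)*p+(1-t)*q)/2) := by linarith
  have hC2 : ((1+t)*p+(1-t)*q)^2 ≤ 4*(u*c1+v*c2)^2 := by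
    nlinarith [mul_nonneg (by linarith : (0:ℝ) ≤ -(u*c1+v*c2) - ((1+t)*p+(1-t)*q)/2)
      (by linarith : (0:ℝ) ≤ -(u*c1+v*c2) + ((1+t)*p+(1-t)*q)/2)]
  have hpq0 : 0 < p*q := by nlinarith [mul_nonneg hp hq, sq_nonneg u, sq_nonneg v]
  nlinarith [sq_nonneg ((1+t)*p - (1-t)*q),
    mul_pos hpq0 (by nlinarith : (0:ℝ) < 1 - t^2 - (u^2+v^2))]

set_option maxHeartbeats 1600000

/-- For `‖r‖ < 1` and `ρ := (1/2)(I + r·σ)` (a strictly positive density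
matrix), and for `x ∈ ℝ³`, with `λ := (x·r)/(1−‖r‖²)` and `ℓ := x + λ r`, the Hermitian
matrix `L := ℓ·σ − λ I` satisfies `ρ∘L = (1/2) x·σ` and `Tr(ρL) = 0`. -/
theorem qubit_sld_formula (r : Fin 3 → ℝ) (hr : r ⬝ᵥ r < 1) (x : Fin 3 → ℝ) :
    (((1 : ℝ)/2) • ((1 : Matrix (Fin 2) (Fin 2) ℂ) + dotSigma r)).PosDef ∧
    (((1 : ℝ)/2) • ((1 : Matrix (Fin 2) (Fin 2) ℂ) + dotSigma r)).trace = 1 ∧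
    (dotSigma (x + ((x ⬝ᵥ r) / (1 - r ⬝ᵥ r)) • r)
      - (((x ⬝ᵥ r) / (1 - r ⬝ᵥ r)) : ℝ) • (1 : Matrix (Fin 2) (Fin 2) ℂ)).IsHermitian ∧
    jprod (((1 : ℝ)/2) • ((1 : Matrix (Fin 2) (Fin 2) ℂ) + dotSigma r))
        (dotSigma (x + ((x ⬝ᵥ r) / (1 - r ⬝ᵥ r)) • r)
          - (((x ⬝ᵥ r) / (1 - r ⬝ᵥ r)) : ℝ) • (1 : Matrix (Fin 2) (Fin 2) ℂ))
      = ((1 : ℝ)/2) • dotSigma x ∧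
    ((((1 : ℝ)/2) • ((1 : Matrix (Fin 2) (Fin 2) ℂ) + dotSigma r)) *
        (dotSigma (x + ((x ⬝ᵥ r) / (1 - r ⬝ᵥ r)) • r)
          - (((x ⬝ᵥ r) / (1 - r ⬝ᵥ r)) : ℝ) • (1 : Matrix (Fin 2) (Fin 2) ℂ))).trace = 0 := by
  have hrr : r ⬝ᵥ r = r 0 ^ 2 + r 1 ^ 2 + r 2 ^ 2 := by
    simp [dotProduct, Fin.sum_univ_three]; ring
  have hxr : x ⬝ᵥ r = x 0 * r 0 + x 1 * r 1 + x 2 * r 2 := by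
    simp [dotProduct, Fin.sum_univ_three]
  have hden : (1 : ℝ) - (r 0 ^ 2 + r 1 ^ 2 + r 2 ^ 2) ≠ 0 := by rw [hrr] at hr; nlinarith
  have hcR : ((x ⬝ᵥ r) / (1 - r ⬝ᵥ r)) * (1 - (r 0 ^ 2 + r 1 ^ 2 + r 2 ^ 2))
      = x 0 * r 0 + x 1 * r 1 + x 2 * r 2 := by
    rw [hxr, hrr]
    field_simp
  generalize hgen : (x ⬝ᵥ r) / (1 - r ⬝ᵥ r) = c at hcR ⊢
  have hrho : ((1 : ℝ)/2) • ((1 : Matrix (Fin 2) (Fin 2) ℂ) + dotSigma r)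
      = !![(((1 + r 2)/2 : ℝ) : ℂ), ((r 0/2 : ℝ) : ℂ) - ((r 1/2 : ℝ) : ℂ) * Complex.I;
           ((r 0/2 : ℝ) : ℂ) + ((r 1/2 : ℝ) : ℂ) * Complex.I, (((1 - r 2)/2 : ℝ) : ℂ)] := by
    ext i j
    fin_cases i <;> fin_cases j
    all_goals simp [dotSigma_eq, Matrix.one_apply]
    all_goals (push_cast; ring)
  have hL : dotSigma (x + c • r) - (c : ℝ) • (1 : Matrix (Fin 2) (Fin 2) ℂ)
      = !![((x 2 + c * r 2 - c : ℝ) : ℂ),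
            ((x 0 + c * r 0 : ℝ) : ℂ) - ((x 1 + c * r 1 : ℝ) : ℂ) * Complex.I;
            ((x 0 + c * r 0 : ℝ) : ℂ) + ((x 1 + c * r 1 : ℝ) : ℂ) * Complex.I,
            ((-(x 2 + c * r 2) - c : ℝ) : ℂ)] := by
    ext i j
    fin_cases i <;> fin_cases j
    all_goals simp [dotSigma_eq, Matrix.one_apply]
    all_goals (push_cast; ring)
  refine ⟨?_, ?_, ?_, ?_, ?_⟩
  · constructor
    · ext i j
      fin_cases i <;> fin_cases j
      all_goals simp [dotSigma_eq, Matrix.conjTranspose_apply, Matrix.one_apply, Complex.ext_iff]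
      all_goals ring
    · intro z hz
      have hz' : z 0 ≠ 0 ∨ z 1 ≠ 0 := by
        by_contra h
        push_neg at h
        apply hz
        ext i
        fin_cases i <;> simp [h.1, h.2]
      rw [Complex.lt_def]
      constructor
      · have hform := key (r 2) (r 0) (r 1)
          ((z 0).re^2 + (z 0).im^2) ((z 1).re^2 + (z 1).im^2)
          ((z 0).re*(z 1).re + (z 0).im*(z 1).im) ((z 0).re*(z 1).im - (z 0).im*(z 1).re)
          (by positivity) (by positivity)
          (by
            rcases hz' with h | h
            · have : (z 0).re ≠ 0 ∨ (z 0).im ≠ 0 := by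
                by_contra hc; push_neg at hc; exact h (Complex.ext hc.1 hc.2)
              rcases this with h' | h' <;> positivity
            · have : (z 1).re ≠ 0 ∨ (z 1).im ≠ 0 := by
                by_contra hc; push_neg at hc; exact h (Complex.ext hc.1 hc.2)
              rcases this with h' | h' <;> positivity)
          (by ring) (by rw [hrr] at hr; linarith)
        rw [hrho]
        simp [dotProduct, mulVec, Fin.sum_univ_two, Finsupp.sum_fintype,
          Complex.add_re, Complex.mul_re, Complex.mul_im]
        nlinarith [hform]
      · rw [hrho]
        simp [dotProduct, mulVec, Fin.sum_univ_two, Finsupp.sum_fintype,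
          Complex.add_im, Complex.mul_re, Complex.mul_im]
        ring
  · rw [hrho]
    simp [trace, Fin.sum_univ_two]
    push_cast
    ring
  · rw [hL]
    ext i j
    fin_cases i <;> fin_cases j
    all_goals simp [Matrix.conjTranspose_apply, Complex.ext_iff]
  · rw [jprod, hrho, hL]
    ext i j
    fin_cases i <;> fin_cases j
    all_goals simp [Matrix.mul_apply, Fin.sum_univ_two, dotSigma_eq, Complex.ext_iff,
      Complex.add_re, Complex.add_im, Complex.mul_re, Complex.mul_im]
    all_goals try constructor
    all_goals try ring
    all_goals try linear_combination (-(1:ℝ)) * hcR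
    all_goals try linear_combination (-(1:ℝ)/2) * hcR
    all_goals try linear_combination ((1:ℝ)/2) * hcR
    all_goals try linear_combination hcR
  · rw [hrho, hL]
    simp [trace, Matrix.mul_apply, Fin.sum_univ_two, Complex.ext_iff,
      Complex.add_re, Complex.add_im, Complex.mul_re, Complex.mul_im]
    all_goals try constructor
    all_goals try ring
    all_goals try linear_combination (-(1:ℝ)) * hcR
    all_goals try linear_combination (-(1:ℝ)/2) * hcR
    all_goals try linear_combination ((1:ℝ)/2) * hcR
    all_goals try linear_combination hcR
end
end

section
/- Let ρ be a strictly positive 2×2 density matrix and let A, B be Hermitian 2×2 complex matrices. Then (1/2)[[A,B],ρ] = (Tr A − 2 Tr(ρA))·(ρ∘B) − (Tr B − 2 Tr(ρB))·(ρ∘A) + ((Tr B)·Tr(ρA) − (Tr A)·Tr(ρB))·ρ, where [X,Y] := XY − YX is the commutator. -/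
open Matrix
open scoped ComplexOrder

noncomputable section

/-- The commutator `[X,Y] := XY − YX`. -/
def mcomm (X Y : Matrix (Fin 2) (Fin 2) ℂ) : Matrix (Fin 2) (Fin 2) ℂ := X * Y - Y * X

/-- For a strictly positive 2×2 density matrix `ρ` and Hermitian `A`, `B`:
`(1/2)[[A,B],ρ] = (Tr A − 2Tr(ρA))·(ρ∘B) − (Tr B − 2Tr(ρB))·(ρ∘A)
 + ((Tr B)Tr(ρA) − (Tr A)Tr(ρB))·ρ`. -/
theorem qubit_torsion_identity (ρ A B : Matrix (Fin 2) (Fin 2) ℂ)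
    (hρpos : ρ.PosDef) (hρtr : ρ.trace = 1)
    (hA : A.IsHermitian) (hB : B.IsHermitian) :
    (1/2 : ℂ) • mcomm (mcomm A B) ρ =
      (A.trace - 2 * (ρ * A).trace) • jprod ρ B
        - (B.trace - 2 * (ρ * B).trace) • jprod ρ A
        + (B.trace * (ρ * A).trace - A.trace * (ρ * B).trace) • ρ := by
  have htr : ρ 1 1 = 1 - ρ 0 0 := by
    have := hρtr
    simp [Matrix.trace, Fin.sum_univ_two] at this
    linear_combination this
  ext i j
  fin_cases i <;> fin_cases j <;>
    simp [jprod, mcomm, Matrix.mul_apply, Matrix.trace, Matrix.diag,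
      Fin.sum_univ_two, Matrix.smul_apply, Matrix.sub_apply, Matrix.add_apply, htr] <;> ring
end
end

section
/- Let ρ be a strictly positive 2×2 density matrix and let A, B be Hermitian 2×2 complex matrices satisfying Tr(ρA) = 0 and Tr(ρB) = 0. Then [[A,B],ρ] lies in the real span of ρ∘A and ρ∘B; explicitly, [[A,B],ρ] = 2(Tr A)·(ρ∘B) − 2(Tr B)·(ρ∘A), where [X,Y] := XY − YX. -/
open Matrix
open scoped ComplexOrder

noncomputable section

/-- The 2×2 Jordan identity specialized to a trace-one `ρ` with `Tr(ρX) = 0`. -/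
lemma jordan (ρ X : Matrix (Fin 2) (Fin 2) ℂ) (h1 : ρ.trace = 1)
    (h0 : (ρ * X).trace = 0) :
    X * ρ + ρ * X = X + X.trace • ρ - X.trace • 1 := by
  have h1' : ρ 0 0 + ρ 1 1 = 1 := by simpa [Matrix.trace, Fin.sum_univ_two] using h1
  have h0' : ρ 0 0 * X 0 0 + ρ 0 1 * X 1 0 + (ρ 1 0 * X 0 1 + ρ 1 1 * X 1 1) = 0 := by
    simpa [Matrix.trace, Matrix.mul_apply, Fin.sum_univ_two] using h0
  ext i j
  fin_cases i <;> fin_cases j <;>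
    simp only [Matrix.add_apply, Matrix.sub_apply, Matrix.smul_apply, Matrix.mul_apply,
      Matrix.one_apply, Matrix.trace, Matrix.diag, Fin.sum_univ_two, smul_eq_mul,
      Fin.isValue, Fin.zero_eta, Fin.mk_one, if_true, reduceIte] <;> norm_num
  · linear_combination h0' - X 1 1 * h1'
  · linear_combination X 0 1 * h1'
  · linear_combination X 1 0 * h1'
  · linear_combination h0' - X 0 0 * h1'

/-- The trace of a Hermitian matrix is real. -/
lemma trace_real (A : Matrix (Fin 2) (Fin 2) ℂ) (hA : A.IsHermitian) :
    ((A.trace.re : ℝ) : ℂ) = A.trace := by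
  have h : star A.trace = A.trace := by
    rw [← Matrix.trace_conjTranspose, hA.eq]
  exact Complex.conj_eq_iff_re.mp h

/-- For a strictly positive 2×2 density matrix `ρ` and Hermitian `A`, `B`
with `Tr(ρA) = Tr(ρB) = 0`, the matrix `[[A,B],ρ]` lies in the real span of `ρ∘A`, `ρ∘B`;
explicitly `[[A,B],ρ] = 2(Tr A)·(ρ∘B) − 2(Tr B)·(ρ∘A)`. -/
theorem qubit_torsion_in_span (ρ A B : Matrix (Fin 2) (Fin 2) ℂ)
    (hρpos : ρ.PosDef) (hρtr : ρ.trace = 1)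
    (hA : A.IsHermitian) (hB : B.IsHermitian)
    (hA0 : (ρ * A).trace = 0) (hB0 : (ρ * B).trace = 0) :
    mcomm (mcomm A B) ρ ∈
      Submodule.span ℝ ({jprod ρ A, jprod ρ B} : Set (Matrix (Fin 2) (Fin 2) ℂ)) ∧
    mcomm (mcomm A B) ρ = (2 * A.trace) • jprod ρ B - (2 * B.trace) • jprod ρ A := by
  have heq : mcomm (mcomm A B) ρ = (2 * A.trace) • jprod ρ B - (2 * B.trace) • jprod ρ A := by
    show (A * B - B * A) * ρ - ρ * (A * B - B * A)
      = (2 * A.trace) • ((1/2 : ℂ) • (ρ * B + B * ρ))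
        - (2 * B.trace) • ((1/2 : ℂ) • (ρ * A + A * ρ))
    have ha := jordan ρ A hρtr hA0
    have hb := jordan ρ B hρtr hB0
    have hAr : ρ * A = A + A.trace • ρ - A.trace • 1 - A * ρ := by rw [← ha]; abel
    have hBr : ρ * B = B + B.trace • ρ - B.trace • 1 - B * ρ := by rw [← hb]; abel
    have e1 : ρ * (A * B) = (A + A.trace • ρ - A.trace • 1 - A * ρ) * B := by
      rw [← mul_assoc, hAr]
    have e2 : ρ * (B * A) = (B + B.trace • ρ - B.trace • 1 - B * ρ) * A := by
      rw [← mul_assoc, hBr]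
    rw [sub_mul, mul_sub, e1, e2, hAr, hBr]
    simp only [sub_mul, add_mul, mul_sub, mul_add, smul_mul_assoc, mul_smul_comm,
      smul_smul, smul_sub, smul_add, one_mul, mul_one, mul_assoc]
    simp only [hAr, hBr]
    simp only [sub_mul, add_mul, mul_sub, mul_add, smul_mul_assoc, mul_smul_comm,
      smul_smul, smul_sub, smul_add, one_mul, mul_one, mul_assoc]
    module
  refine ⟨heq ▸ ?_, heq⟩
  have c1 : ((2 * A.trace.re : ℝ) : ℂ) = 2 * A.trace := by
    push_cast
    rw [trace_real A hA]
  have c2 : ((2 * B.trace.re : ℝ) : ℂ) = 2 * B.trace := by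
    push_cast
    rw [trace_real B hB]
  have h1 : (2 * A.trace) • jprod ρ B = (2 * A.trace.re : ℝ) • jprod ρ B := by
    rw [← c1, Complex.coe_smul]
  have h2 : (2 * B.trace) • jprod ρ A = (2 * B.trace.re : ℝ) • jprod ρ A := by
    rw [← c2, Complex.coe_smul]
  rw [h1, h2]
  exact Submodule.sub_mem _
    (Submodule.smul_mem _ _ (Submodule.subset_span (by simp)))
    (Submodule.smul_mem _ _ (Submodule.subset_span (by simp)))
end
end

section
/- Let ρ be a strictly positive 2×2 density matrix (with complex entries) and let A, B be 2×2 real symmetric matrices (regarded as complex matrices). Then there exists a 2×2 real symmetric matrix C such that [[A,B],ρ] = ρ∘C, where [X,Y] := XY − YX. -/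
open Matrix
open scoped ComplexOrder

noncomputable section

/-- A real symmetric matrix: a Hermitian matrix all of whose entries are real. -/
def IsRealSymm {d : ℕ} (A : Matrix (Fin d) (Fin d) ℂ) : Prop :=
  A.IsHermitian ∧ ∀ i j, (A i j).im = 0

/-- For a strictly positive 2×2 density matrix `ρ` and real symmetric
`A`, `B`, there is a real symmetric `C` with `[[A,B],ρ] = ρ∘C`. -/
theorem qubit_real_involutive (ρ A B : Matrix (Fin 2) (Fin 2) ℂ)
    (hρpos : ρ.PosDef) (hρtr : ρ.trace = 1)
    (hA : IsRealSymm A) (hB : IsRealSymm B) :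
    ∃ C : Matrix (Fin 2) (Fin 2) ℂ, IsRealSymm C ∧ mcomm (mcomm A B) ρ = jprod ρ C := by
  have hH : ρ.IsHermitian := hρpos.1
  have h00 : (starRingEnd ℂ) (ρ 0 0) = ρ 0 0 := hH.apply 0 0
  have h11 : (starRingEnd ℂ) (ρ 1 1) = ρ 1 1 := hH.apply 1 1
  have h10 : ρ 1 0 = (starRingEnd ℂ) (ρ 0 1) := (hH.apply 1 0).symm
  have hAstar : ∀ i j, (starRingEnd ℂ) (A i j) = A i j := fun i j =>
    Complex.conj_eq_iff_im.2 (hA.2 i j)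
  have hBstar : ∀ i j, (starRingEnd ℂ) (B i j) = B i j := fun i j =>
    Complex.conj_eq_iff_im.2 (hB.2 i j)
  have hA10 : A 1 0 = A 0 1 := by rw [← hAstar 1 0]; exact hA.1.apply 0 1
  have hB10 : B 1 0 = B 0 1 := by rw [← hBstar 1 0]; exact hB.1.apply 0 1
  have htr : ρ 0 0 + ρ 1 1 = 1 := by
    simpa [Matrix.trace, Fin.sum_univ_two] using hρtr
  have h11' : ρ 1 1 = 1 - ρ 0 0 := by linear_combination htr
  -- entries of M := [[A,B],ρ]
  have hsymm : ∀ i j : Fin 2, mcomm (mcomm A B) ρ i j = mcomm (mcomm A B) ρ j i := by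
    intro i j
    fin_cases i <;> fin_cases j <;>
      simp only [mcomm, Matrix.sub_apply, Matrix.mul_apply, Fin.sum_univ_two,
        Fin.mk_zero, Fin.mk_one, Fin.isValue, h11', hA10, hB10, h10] <;> ring
  have hstar : ∀ i j : Fin 2, (starRingEnd ℂ) (mcomm (mcomm A B) ρ i j) =
      mcomm (mcomm A B) ρ j i := by
    intro i j
    fin_cases i <;> fin_cases j <;>
      simp only [mcomm, Matrix.sub_apply, Matrix.mul_apply, Fin.sum_univ_two,
        Fin.mk_zero, Fin.mk_one, Fin.isValue, map_sub, map_add, _root_.map_mul,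
        hAstar, hBstar, h00, h11, h10, Complex.conj_conj, h11', hA10, hB10,
        _root_.map_one] <;> ring
  refine ⟨(2:ℂ) • mcomm (mcomm A B) ρ, ⟨?_, ?_⟩, ?_⟩
  · show ((2:ℂ) • mcomm (mcomm A B) ρ)ᴴ = (2:ℂ) • mcomm (mcomm A B) ρ
    ext i j
    simp only [Matrix.conjTranspose_apply, Matrix.smul_apply, smul_eq_mul,
      Complex.star_def, _root_.map_mul, _root_.map_ofNat, hstar j i]
  · intro i j
    have h : (starRingEnd ℂ) (((2:ℂ) • mcomm (mcomm A B) ρ) i j) =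
        ((2:ℂ) • mcomm (mcomm A B) ρ) i j := by
      simp only [Matrix.smul_apply, smul_eq_mul, _root_.map_mul, _root_.map_ofNat, hstar i j,
        hsymm j i]
    exact Complex.conj_eq_iff_im.1 h
  · ext i j
    fin_cases i <;> fin_cases j <;>
      simp only [mcomm, jprod, Matrix.smul_apply, Matrix.sub_apply, Matrix.add_apply,
        Matrix.mul_apply, Fin.sum_univ_two, smul_eq_mul, Fin.mk_zero, Fin.mk_one,
        Fin.isValue, h11', hA10, hB10, h10] <;> ring
end
end

section
/- For any two Hermitian 2×2 complex matrices A and B there exists a 2×2 unitary matrix U such that both U*AU and U*BU have all real entries (hence are real symmetric matrices). -/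
open Matrix
open scoped ComplexOrder

noncomputable section

/-- For any two Hermitian 2×2 complex matrices `A`, `B` there is a
2×2 unitary `U` such that `U*AU` and `U*BU` have all real entries. -/
theorem exists_unitary_real_entries (A B : Matrix (Fin 2) (Fin 2) ℂ)
    (hA : A.IsHermitian) (hB : B.IsHermitian) :
    ∃ U : Matrix (Fin 2) (Fin 2) ℂ, U ∈ Matrix.unitaryGroup (Fin 2) ℂ ∧
      (∀ i j, ((Uᴴ * A * U) i j).im = 0) ∧ (∀ i j, ((Uᴴ * B * U) i j).im = 0) := by
  set V : Matrix (Fin 2) (Fin 2) ℂ := (hA.eigenvectorUnitary : Matrix (Fin 2) (Fin 2) ℂ) with hV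
  have hVmem : V ∈ Matrix.unitaryGroup (Fin 2) ℂ := hA.eigenvectorUnitary.2
  have hdiag : star V * A * V = diagonal (RCLike.ofReal ∘ hA.eigenvalues) :=
    by have h := hA.conjStarAlgAut_star_eigenvectorUnitary; rw [Unitary.conjStarAlgAut_apply] at h; simpa using h
  set B' : Matrix (Fin 2) (Fin 2) ℂ := Vᴴ * B * V with hB'def
  have hB' : B'.IsHermitian := Matrix.isHermitian_conjTranspose_mul_mul V hB
  set w : ℂ := B' 0 1 with hw
  set c : ℂ := if w = 0 then 1 else (starRingEnd ℂ) w / ‖w‖ with hc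
  have hcc : (starRingEnd ℂ) c * c = 1 := by
    rcases eq_or_ne w 0 with h | h
    · simp [hc, h]
    · have habs : (‖w‖ : ℂ) ≠ 0 := by
        exact_mod_cast (norm_ne_zero_iff.mpr h)
      rw [hc, if_neg h]
      field_simp
      rw [map_div₀, Complex.conj_conj, Complex.conj_ofReal, mul_div_assoc', mul_comm,
        Complex.mul_conj, Complex.normSq_eq_norm_sq]
      push_cast; field_simp
  have hwc : (w * c).im = 0 := by
    rcases eq_or_ne w 0 with h | h
    · simp [h]
    · have habs : (‖w‖ : ℂ) ≠ 0 := by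
        exact_mod_cast (norm_ne_zero_iff.mpr h)
      have hwceq : w * c = ‖w‖ := by
        rw [hc, if_neg h, mul_div_assoc', Complex.mul_conj, Complex.normSq_eq_norm_sq]
        push_cast
        field_simp
      rw [hwceq]; simp
  have hc0 : (![1, c] : Fin 2 → ℂ) 0 = 1 := rfl
  have hc1 : (![1, c] : Fin 2 → ℂ) 1 = c := rfl
  set D : Matrix (Fin 2) (Fin 2) ℂ := diagonal ![1, c] with hD
  have hDstar : Dᴴ = diagonal (fun i => (starRingEnd ℂ) ((![1, c] : Fin 2 → ℂ) i)) := by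
    rw [hD, Matrix.diagonal_conjTranspose]
    rfl
  have hDmem : D ∈ Matrix.unitaryGroup (Fin 2) ℂ := by
    rw [Matrix.mem_unitaryGroup_iff']
    rw [Matrix.star_eq_conjTranspose, hDstar, hD, Matrix.diagonal_mul_diagonal]
    have heq : (fun i => (starRingEnd ℂ) ((![1, c] : Fin 2 → ℂ) i) * (![1, c] : Fin 2 → ℂ) i)
        = fun _ => (1 : ℂ) := by
      funext i
      fin_cases i
      · simp
      · simpa using hcc
    rw [heq, Matrix.diagonal_one]
  have key : ∀ M : Matrix (Fin 2) (Fin 2) ℂ, ∀ i j,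
      (Dᴴ * M * D) i j
        = (starRingEnd ℂ) ((![1, c] : Fin 2 → ℂ) i) * M i j * (![1, c] : Fin 2 → ℂ) j := by
    intro M i j
    rw [hDstar, hD, Matrix.mul_diagonal, Matrix.diagonal_mul]
  refine ⟨V * D, Submonoid.mul_mem _ hVmem hDmem, ?_, ?_⟩
  · intro i j
    have hre : (V * D)ᴴ * A * (V * D) = Dᴴ * (star V * A * V) * D := by
      simp only [Matrix.conjTranspose_mul, Matrix.star_eq_conjTranspose]
      noncomm_ring
    rw [hre, key, hdiag]
    rcases eq_or_ne i j with h | h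
    · subst h
      simp only [Matrix.diagonal_apply_eq, Function.comp_apply]
      fin_cases i <;> simp only [Fin.isValue, Fin.zero_eta, Fin.mk_one, id_eq]
      · rw [hc0]; simp
      · rw [hc1, mul_comm ((starRingEnd ℂ) c) _, mul_assoc, hcc, mul_one]
        simp
    · rw [Matrix.diagonal_apply_ne _ h]
      simp
  · intro i j
    have hre : (V * D)ᴴ * B * (V * D) = Dᴴ * B' * D := by
      rw [hB'def]
      simp only [Matrix.conjTranspose_mul]
      noncomm_ring
    rw [hre, key]
    have h00 : (B' 0 0).im = 0 := Complex.conj_eq_iff_im.mp (hB'.apply 0 0)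
    have h11 : (B' 1 1).im = 0 := Complex.conj_eq_iff_im.mp (hB'.apply 1 1)
    have h10 : B' 1 0 = (starRingEnd ℂ) w := (hB'.apply 1 0).symm ▸ rfl
    fin_cases i <;> fin_cases j <;>
      simp only [Fin.isValue, Fin.zero_eta, Fin.mk_one, id_eq]
    · rw [hc0]; simpa using h00
    · rw [hc0, hc1]
      simpa [mul_comm] using hwc
    · rw [hc1, hc0, mul_one, h10, ← RingHom.map_mul]
      rw [Complex.conj_im, mul_comm]
      rw [hwc, neg_zero]
    · rw [hc1, mul_comm ((starRingEnd ℂ) c) _, mul_assoc, hcc, mul_one]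
      exact h11
end
end

section
/- Fix a strictly positive d×d density matrix ρ, Hermitian matrices L₁,…,Lₙ with Tr(ρLᵢ) = 0 whose Gram matrix G = [Re Tr(ρLᵢLⱼ)] is invertible with inverse [g^{ij}], and reals t₀ ∈ ℝ, c = (c₁,…,cₙ) ∈ ℝⁿ. Then: (a) for every finite set Ω, POVM (π_ω)_{ω∈Ω} and function g : Ω → ℝ such that A := Σ_ω g(ω)π_ω satisfies Tr(ρA) = t₀ and Re Tr(ρLᵢA) = cᵢ for all i, one has Σ_ω (g(ω) − t₀)² Tr(ρπ_ω) ≥ cᵀG⁻¹c; (b) the Hermitian matrix F := t₀·I + Σ_{i,j} cᵢ g^{ij} Lⱼ satisfies Tr(ρF) = t₀, Re Tr(ρLᵢF) = cᵢ for all i, and Tr(ρ(F − t₀·I)²) = cᵀG⁻¹c, so the spectral measure of F (with the eigenvalues as estimates) attains the lower bound. Hence the minimum of the mean squared error over all locally unbiased estimators of a scalar function equals cᵀG⁻¹c. -/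
open Matrix
open scoped ComplexOrder

noncomputable section

lemma trace_psd_nonneg {d : ℕ} {P : Matrix (Fin d) (Fin d) ℂ} (hP : P.PosSemidef) :
    0 ≤ P.trace := by
  rw [Matrix.trace]
  apply Finset.sum_nonneg
  intro i _
  exact hP.diag_nonneg

lemma trace_mul_psd_nonneg {d : ℕ} {P Q : Matrix (Fin d) (Fin d) ℂ}
    (hP : P.PosSemidef) (hQ : Q.PosSemidef) : 0 ≤ (P * Q).trace := by
  open scoped MatrixOrder in
  obtain ⟨B, rfl⟩ := CStarAlgebra.nonneg_iff_eq_star_mul_self.mp hP.nonneg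
  rw [Matrix.mul_assoc, Matrix.trace_mul_comm]
  exact trace_psd_nonneg (hQ.mul_mul_conjTranspose_same B)

lemma trace_mul_psd_nonneg_re {d : ℕ} {P Q : Matrix (Fin d) (Fin d) ℂ}
    (hP : P.PosSemidef) (hQ : Q.PosSemidef) : 0 ≤ ((P * Q).trace).re := by
  have := trace_mul_psd_nonneg hP hQ
  rw [Complex.le_def] at this
  simpa using this.1

lemma star_trace_three {d : ℕ} {A B C : Matrix (Fin d) (Fin d) ℂ}
    (hA : A.IsHermitian) (hB : B.IsHermitian) (hC : C.IsHermitian) :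
    ((A * B * C).trace).re = ((A * C * B).trace).re := by
  have h : star ((A * B * C).trace) = (A * C * B).trace := by
    rw [← Matrix.trace_conjTranspose]
    simp only [Matrix.conjTranspose_mul, hA.eq, hB.eq, hC.eq]
    rw [← Matrix.mul_assoc, Matrix.trace_mul_cycle, Matrix.mul_assoc]
  rw [← h, Complex.star_def, Complex.conj_re]

lemma cs_trace {d : ℕ} {ρ π X : Matrix (Fin d) (Fin d) ℂ}
    (hρ : ρ.PosSemidef) (hπ : π.PosSemidef) (hX : X.IsHermitian) :
    ((ρ * X * π).trace).re ^ 2 ≤ ((ρ * π).trace).re * ((ρ * X * π * X).trace).re := by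
  set a := ((ρ * π).trace).re with ha
  set b := ((ρ * X * π).trace).re with hb
  set c := ((ρ * X * π * X).trace).re with hc
  have key : ∀ t : ℝ, 0 ≤ a * (t * t) + (2 * b) * t + c := by
    intro t
    have hM : (t • 1 + X).IsHermitian := by
      unfold Matrix.IsHermitian
      simp [Matrix.conjTranspose_add, Matrix.conjTranspose_smul, hX.eq]
    have h1 : (ρ * (t • 1 + X) * π * (t • 1 + X)).trace
        = (((t • 1 + X) * ρ * (t • 1 + X)ᴴ) * π).trace := by
      rw [Matrix.trace_mul_comm]
      simp [Matrix.mul_assoc, hM.eq]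
    have hpos : 0 ≤ ((ρ * (t • 1 + X) * π * (t • 1 + X)).trace).re := by
      rw [h1]
      exact trace_mul_psd_nonneg_re (hρ.mul_mul_conjTranspose_same (t • 1 + X)) hπ
    have hexp : (ρ * (t • 1 + X) * π * (t • 1 + X)).trace =
        ((t*t : ℝ):ℂ) * (ρ*π).trace + ((t:ℝ):ℂ) * ((ρ*π*X).trace + (ρ*X*π).trace) + (ρ*X*π*X).trace := by
      push_cast
      simp only [Matrix.mul_add, Matrix.add_mul, Matrix.mul_smul, Matrix.smul_mul,
        Matrix.mul_one, Matrix.one_mul, Matrix.trace_add, Matrix.trace_smul, smul_smul,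
        Complex.real_smul, Matrix.mul_assoc]
      ring
    have hb' : ((ρ*π*X).trace).re = b := by
      rw [hb]; exact star_trace_three hρ.1 hπ.1 hX
    calc (0:ℝ) ≤ ((ρ * (t • 1 + X) * π * (t • 1 + X)).trace).re := hpos
    _ = a * (t * t) + (2 * b) * t + c := by
        rw [hexp]
        simp only [Complex.add_re, Complex.re_ofReal_mul, hb', ← ha, ← hb, ← hc]
        ring
  have hd := discrim_le_zero key
  rw [discrim] at hd
  nlinarith [hd]


/-- A POVM on a finite set `Ω`: positive semidefinite matrices summing to `I`. -/
def IsPOVM {d : ℕ} {Ω : Type} [Fintype Ω] (π : Ω → Matrix (Fin d) (Fin d) ℂ) : Prop :=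
  (∀ ω, (π ω).PosSemidef) ∧ ∑ ω, π ω = 1

/-- The scalar estimation bound at a point: (a) every locally unbiased
finite-outcome estimator of a scalar has mean squared error at least `cᵀG⁻¹c`;
(b) the observable `F = t₀I + Σ cᵢ gⁱʲ Lⱼ` is locally unbiased and attains it;
hence `cᵀG⁻¹c` is the minimum mean squared error. -/
theorem scalar_estimation_bound (d n : ℕ)
    (ρ : Matrix (Fin d) (Fin d) ℂ) (hρ : ρ.PosDef) (htr : ρ.trace = 1)
    (L : Fin n → Matrix (Fin d) (Fin d) ℂ) (hL : ∀ i, (L i).IsHermitian)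
    (hL0 : ∀ i, (ρ * L i).trace = 0)
    (G : Matrix (Fin n) (Fin n) ℝ)
    (hG : ∀ i j, G i j = (Matrix.trace (ρ * L i * L j)).re)
    (hGinv : IsUnit G.det)
    (t₀ : ℝ) (c : Fin n → ℝ) :
    (∀ (Ω : Type) (_ : Fintype Ω) (π : Ω → Matrix (Fin d) (Fin d) ℂ) (g : Ω → ℝ),
      IsPOVM π →
      Matrix.trace (ρ * ∑ ω, g ω • π ω) = (t₀ : ℂ) →
      (∀ i, (Matrix.trace (ρ * L i * ∑ ω, g ω • π ω)).re = c i) →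
      c ⬝ᵥ G⁻¹.mulVec c ≤ ∑ ω, (g ω - t₀)^2 * (Matrix.trace (ρ * π ω)).re) ∧
    ((t₀ • (1 : Matrix (Fin d) (Fin d) ℂ) + ∑ i, ∑ j, (c i * G⁻¹ i j) • L j).IsHermitian ∧
      Matrix.trace (ρ * (t₀ • (1 : Matrix (Fin d) (Fin d) ℂ) +
        ∑ i, ∑ j, (c i * G⁻¹ i j) • L j)) = (t₀ : ℂ) ∧
      (∀ i, (Matrix.trace (ρ * L i * (t₀ • (1 : Matrix (Fin d) (Fin d) ℂ) +
        ∑ i', ∑ j, (c i' * G⁻¹ i' j) • L j))).re = c i) ∧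
      Matrix.trace (ρ * (∑ i, ∑ j, (c i * G⁻¹ i j) • L j) *
        (∑ i, ∑ j, (c i * G⁻¹ i j) • L j)) = ((c ⬝ᵥ G⁻¹.mulVec c : ℝ) : ℂ)) ∧
    IsLeast {x : ℝ | ∃ (Ω : Type) (_ : Fintype Ω)
        (π : Ω → Matrix (Fin d) (Fin d) ℂ) (g : Ω → ℝ),
        IsPOVM π ∧
        Matrix.trace (ρ * ∑ ω, g ω • π ω) = (t₀ : ℂ) ∧
        (∀ i, (Matrix.trace (ρ * L i * ∑ ω, g ω • π ω)).re = c i) ∧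
        x = ∑ ω, (g ω - t₀)^2 * (Matrix.trace (ρ * π ω)).re}
      (c ⬝ᵥ G⁻¹.mulVec c) := by
  classical
  set X : Matrix (Fin d) (Fin d) ℂ := ∑ i, ∑ j, (c i * G⁻¹ i j) • L j with hXdef
  set K : ℝ := c ⬝ᵥ G⁻¹.mulVec c with hKdef
  clear_value X K
  have hXh : X.IsHermitian := by
    unfold Matrix.IsHermitian
    rw [hXdef]
    simp [Matrix.conjTranspose_sum, Matrix.conjTranspose_smul, (hL _).eq]
  have hGsym : ∀ i j, G i j = G j i := by
    intro i j
    rw [hG i j, hG j i]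
    exact star_trace_three hρ.1 (hL i) (hL j)
  have hGt : Gᵀ = G := by ext i j; exact hGsym j i
  have hGiG : G⁻¹ * G = 1 := Matrix.nonsing_inv_mul G hGinv
  have keyR : ∀ M : Matrix (Fin d) (Fin d) ℂ, Matrix.trace (ρ * M * X)
      = ∑ i, ∑ j, ((c i * G⁻¹ i j : ℝ) : ℂ) * Matrix.trace (ρ * M * L j) := by
    intro M
    rw [hXdef]
    simp [Matrix.mul_sum, Matrix.mul_smul, Matrix.trace_sum, Matrix.trace_smul,
      Complex.real_smul]
  have keyM : ∀ M : Matrix (Fin d) (Fin d) ℂ, Matrix.trace (ρ * X * M)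
      = ∑ i, ∑ j, ((c i * G⁻¹ i j : ℝ) : ℂ) * Matrix.trace (ρ * L j * M) := by
    intro M
    rw [hXdef]
    simp [Matrix.sum_mul, Matrix.mul_sum, Matrix.smul_mul, Matrix.mul_smul,
      Matrix.trace_sum, Matrix.trace_smul, Complex.real_smul, Matrix.mul_assoc]
  have hKsum : ∑ i, ∑ j, (c i * G⁻¹ i j) * c j = K := by
    rw [hKdef]
    simp only [dotProduct, Matrix.mulVec, Finset.mul_sum, mul_assoc]
  have hreLX : ∀ i, (Matrix.trace (ρ * L i * X)).re = c i := by
    intro i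
    rw [keyR (L i)]
    simp only [Complex.re_sum, Complex.re_ofReal_mul]
    have : ∀ k, ∑ j, (c k * G⁻¹ k j) * (Matrix.trace (ρ * L i * L j)).re
        = c k * ((G⁻¹ * G) k i) := by
      intro k
      rw [Matrix.mul_apply, Finset.mul_sum]
      exact Finset.sum_congr rfl fun j _ => by rw [← hG i j, hGsym i j]; ring
    rw [Finset.sum_congr rfl fun k _ => this k, hGiG]
    simp [Matrix.one_apply]
  have htrρX : Matrix.trace (ρ * X) = 0 := by
    rw [hXdef]
    simp [Matrix.mul_sum, Matrix.mul_smul, Matrix.trace_sum, Matrix.trace_smul, hL0]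
  have hFh : (t₀ • (1 : Matrix (Fin d) (Fin d) ℂ) + X).IsHermitian := by
    unfold Matrix.IsHermitian
    simp [Matrix.conjTranspose_add, Matrix.conjTranspose_smul, hXh.eq]
  have hb2 : Matrix.trace (ρ * (t₀ • (1 : Matrix (Fin d) (Fin d) ℂ) + X)) = (t₀ : ℂ) := by
    rw [Matrix.mul_add, Matrix.trace_add, Matrix.mul_smul, Matrix.mul_one,
      Matrix.trace_smul, htrρX, htr]
    simp [Complex.real_smul]
  have hb3 : ∀ i, (Matrix.trace (ρ * L i * (t₀ • (1 : Matrix (Fin d) (Fin d) ℂ) + X))).re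
      = c i := by
    intro i
    rw [Matrix.mul_add, Matrix.trace_add, Complex.add_re, Matrix.mul_smul, Matrix.mul_one,
      Matrix.trace_smul, hL0 i, hreLX i]
    simp
  have hb4 : Matrix.trace (ρ * X * X) = ((K : ℝ) : ℂ) := by
    have hre : (Matrix.trace (ρ * X * X)).re = K := by
      rw [keyM X]
      simp only [Complex.re_sum, Complex.re_ofReal_mul, hreLX]
      exact hKsum
    have him : star (Matrix.trace (ρ * X * X)) = Matrix.trace (ρ * X * X) := by
      rw [← Matrix.trace_conjTranspose]
      simp only [Matrix.conjTranspose_mul, hXh.eq, hρ.1.eq]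
      rw [← Matrix.mul_assoc, Matrix.trace_mul_cycle]
    have him0 : (Matrix.trace (ρ * X * X)).im = 0 := by
      rw [Complex.star_def, Complex.conj_eq_iff_im] at him
      exact him
    apply Complex.ext <;> simp [hre, him0]

  have hbound : ∀ (Ω : Type) (inst : Fintype Ω) (π : Ω → Matrix (Fin d) (Fin d) ℂ) (g : Ω → ℝ),
      (∀ ω, (π ω).PosSemidef) → (∑ ω, π ω = 1) →
      Matrix.trace (ρ * ∑ ω, g ω • π ω) = (t₀ : ℂ) →
      (∀ i, (Matrix.trace (ρ * L i * ∑ ω, g ω • π ω)).re = c i) →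
      K ≤ ∑ ω, (g ω - t₀)^2 * (Matrix.trace (ρ * π ω)).re := by
    intro Ω inst π g hpos hsum hA1 hA2
    have haω : ∀ ω, 0 ≤ (Matrix.trace (ρ * π ω)).re :=
      fun ω => trace_mul_psd_nonneg_re hρ.posSemidef (hpos ω)
    have hcs : ∀ ω, ((ρ * X * π ω).trace).re ^ 2
        ≤ ((ρ * π ω).trace).re * ((ρ * X * π ω * X).trace).re :=
      fun ω => cs_trace hρ.posSemidef (hpos ω) hXh
    have hcω : ∀ ω, 0 ≤ ((ρ * X * π ω * X).trace).re := by
      intro ω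
      have h1 : (ρ * X * π ω * X).trace = ((X * ρ * Xᴴ) * (π ω)).trace := by
        rw [Matrix.trace_mul_comm]
        simp [Matrix.mul_assoc, hXh.eq]
      rw [h1]
      exact trace_mul_psd_nonneg_re (hρ.posSemidef.mul_mul_conjTranspose_same X) (hpos ω)
    have hsumc : ∑ ω, ((ρ * X * π ω * X).trace).re = K := by
      have h2 : ∑ ω, (ρ * X * π ω * X) = ρ * X * X := by
        rw [← Matrix.sum_mul, ← Matrix.mul_sum, hsum, Matrix.mul_one]
      calc ∑ ω, ((ρ * X * π ω * X).trace).re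
          = ((∑ ω, ρ * X * π ω * X).trace).re := by rw [Matrix.trace_sum]; simp
        _ = K := by rw [h2, hb4]; simp
    have hB : ∑ ω, (g ω - t₀) • π ω
        = (∑ ω, g ω • π ω) - t₀ • (1 : Matrix (Fin d) (Fin d) ℂ) := by
      rw [← hsum, Finset.smul_sum, ← Finset.sum_sub_distrib]
      exact Finset.sum_congr rfl fun ω _ => by rw [sub_smul]
    have hKb : ∑ ω, (g ω - t₀) * ((ρ * X * π ω).trace).re = K := by
      have h3 : ∑ ω, (g ω - t₀) • (ρ * X * π ω)
          = ρ * X * ((∑ ω, g ω • π ω) - t₀ • 1) := by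
        rw [← hB, Matrix.mul_sum]
        exact Finset.sum_congr rfl fun ω _ => by rw [Matrix.mul_smul]
      have h5 : ((ρ * X * ∑ ω, g ω • π ω).trace).re = K := by
        rw [keyM]
        simp only [Complex.re_sum, Complex.re_ofReal_mul, hA2]
        exact hKsum
      have h4 : ((ρ * X * ((∑ ω, g ω • π ω) - t₀ • 1)).trace).re = K := by
        rw [Matrix.mul_sub, Matrix.trace_sub, Complex.sub_re, Matrix.mul_smul, Matrix.mul_one,
          Matrix.trace_smul, h5]
        simp [htrρX, Complex.real_smul]
      calc ∑ ω, (g ω - t₀) * ((ρ * X * π ω).trace).re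
          = ((∑ ω, (g ω - t₀) • (ρ * X * π ω)).trace).re := by
            rw [Matrix.trace_sum]
            simp [Matrix.trace_smul, Complex.real_smul]
        _ = K := by rw [h3]; exact h4
    have hK0 : 0 ≤ K := hsumc ▸ Finset.sum_nonneg fun ω _ => hcω ω
    have hfg : K ≤ ∑ ω, (|g ω - t₀| * Real.sqrt ((Matrix.trace (ρ * π ω)).re))
        * Real.sqrt (((ρ * X * π ω * X).trace).re) := by
      rw [← hKb]
      apply Finset.sum_le_sum
      intro ω _
      have h1 : (g ω - t₀) * ((ρ * X * π ω).trace).re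
          ≤ |g ω - t₀| * |((ρ * X * π ω).trace).re| := by
        rw [← abs_mul]; exact le_abs_self _
      have h2 : |((ρ * X * π ω).trace).re|
          ≤ Real.sqrt ((Matrix.trace (ρ * π ω)).re)
            * Real.sqrt (((ρ * X * π ω * X).trace).re) := by
        calc |((ρ * X * π ω).trace).re| = Real.sqrt (((ρ * X * π ω).trace).re ^ 2) :=
              (Real.sqrt_sq_eq_abs _).symm
          _ ≤ Real.sqrt (((ρ * π ω).trace).re * ((ρ * X * π ω * X).trace).re) :=
              Real.sqrt_le_sqrt (hcs ω)
          _ = _ := Real.sqrt_mul (haω ω) _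
      calc (g ω - t₀) * ((ρ * X * π ω).trace).re
          ≤ |g ω - t₀| * |((ρ * X * π ω).trace).re| := h1
        _ ≤ |g ω - t₀| * (Real.sqrt ((Matrix.trace (ρ * π ω)).re)
              * Real.sqrt (((ρ * X * π ω * X).trace).re)) :=
            mul_le_mul_of_nonneg_left h2 (abs_nonneg _)
        _ = _ := by ring
    have hfg2 : (∑ ω, (|g ω - t₀| * Real.sqrt ((Matrix.trace (ρ * π ω)).re))
        * Real.sqrt (((ρ * X * π ω * X).trace).re)) ^ 2
        ≤ (∑ ω, (g ω - t₀)^2 * (Matrix.trace (ρ * π ω)).re) * K := by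
      have hcs2 := Finset.sum_mul_sq_le_sq_mul_sq Finset.univ
        (fun ω => |g ω - t₀| * Real.sqrt ((Matrix.trace (ρ * π ω)).re))
        (fun ω => Real.sqrt (((ρ * X * π ω * X).trace).re))
      have hf2 : ∑ ω, (|g ω - t₀| * Real.sqrt ((Matrix.trace (ρ * π ω)).re)) ^ 2
          = ∑ ω, (g ω - t₀)^2 * (Matrix.trace (ρ * π ω)).re :=
        Finset.sum_congr rfl fun ω _ => by
          rw [mul_pow, sq_abs, Real.sq_sqrt (haω ω)]
      have hq2 : ∑ ω, (Real.sqrt (((ρ * X * π ω * X).trace).re)) ^ 2 = K := by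
        rw [← hsumc]
        exact Finset.sum_congr rfl fun ω _ => Real.sq_sqrt (hcω ω)
      rw [hf2, hq2] at hcs2
      exact hcs2
    rcases hK0.eq_or_lt with h | h
    · rw [← h]
      exact Finset.sum_nonneg fun ω _ => mul_nonneg (sq_nonneg _) (haω ω)
    · have hfg0 : 0 ≤ ∑ ω, (|g ω - t₀| * Real.sqrt ((Matrix.trace (ρ * π ω)).re))
          * Real.sqrt (((ρ * X * π ω * X).trace).re) := le_trans hK0 hfg
      have hmul : K * K ≤ (∑ ω, (g ω - t₀)^2 * (Matrix.trace (ρ * π ω)).re) * K := by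
        nlinarith [hfg, hfg2, hfg0]
      exact le_of_mul_le_mul_right hmul h

  -- spectral construction
  have hUU : (hFh.eigenvectorUnitary : Matrix (Fin d) (Fin d) ℂ)
      * star (hFh.eigenvectorUnitary : Matrix (Fin d) (Fin d) ℂ) = 1 :=
    Matrix.mem_unitaryGroup_iff.mp hFh.eigenvectorUnitary.2
  have hUU' : star (hFh.eigenvectorUnitary : Matrix (Fin d) (Fin d) ℂ)
      * (hFh.eigenvectorUnitary : Matrix (Fin d) (Fin d) ℂ) = 1 :=
    Matrix.mem_unitaryGroup_iff'.mp hFh.eigenvectorUnitary.2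
  set U : Matrix (Fin d) (Fin d) ℂ := (hFh.eigenvectorUnitary : Matrix (Fin d) (Fin d) ℂ)
    with hUdef
  set ev : Fin d → ℝ := hFh.eigenvalues with hevdef
  have hspec : t₀ • (1 : Matrix (Fin d) (Fin d) ℂ) + X
      = U * Matrix.diagonal (fun i => ((ev i : ℝ) : ℂ)) * star U := by
    have h := hFh.spectral_theorem
    rw [Unitary.conjStarAlgAut_apply] at h
    rw [hUdef, hevdef]
    exact h
  set πs : Fin d → Matrix (Fin d) (Fin d) ℂ :=
    fun k => U * Matrix.diagonal (Pi.single k (1:ℂ)) * star U with hπsdef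
  have hπpsd : ∀ k, (πs k).PosSemidef := by
    intro k
    have hdiag : (Matrix.diagonal (Pi.single k (1:ℂ))).PosSemidef := by
      rw [Matrix.posSemidef_diagonal_iff]
      intro i
      rcases eq_or_ne i k with h | h <;> simp [Pi.single_apply, h]
    have := hdiag.mul_mul_conjTranspose_same U
    simp only [hπsdef]
    simpa [Matrix.star_eq_conjTranspose] using this
  have hπsum : ∑ k, πs k = 1 := by
    simp only [hπsdef]
    have hstep : ∑ k : Fin d, U * Matrix.diagonal (Pi.single k (1:ℂ)) * star U
        = U * (∑ k : Fin d, Matrix.diagonal (Pi.single k (1:ℂ))) * star U := by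
      rw [Matrix.mul_sum, Matrix.sum_mul]
    rw [hstep]
    have : ∑ k : Fin d, Matrix.diagonal (Pi.single k (1:ℂ)) = 1 := by
      ext i j
      by_cases h : i = j <;>
        simp [Matrix.sum_apply, Matrix.diagonal_apply, Pi.single_apply, Matrix.one_apply, h]
    rw [this, Matrix.mul_one, hUU]
  have hcomb : ∀ s : Fin d → ℝ, ∑ k, s k • πs k
      = U * Matrix.diagonal (fun i => ((s i : ℝ) : ℂ)) * star U := by
    intro s
    have h1 : ∀ k, s k • πs k
        = U * (s k • Matrix.diagonal (Pi.single k (1:ℂ))) * star U := by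
      intro k
      simp only [hπsdef]
      rw [Matrix.mul_smul, Matrix.smul_mul]
    rw [Finset.sum_congr rfl fun k _ => h1 k, ← Matrix.sum_mul, ← Matrix.mul_sum]
    congr 2
    ext i j
    by_cases h : i = j <;>
      simp [Matrix.sum_apply, Matrix.diagonal_apply, Pi.single_apply, Complex.real_smul,
        Matrix.smul_apply, h]
  have hF2 : ∑ k, ev k • πs k = t₀ • (1 : Matrix (Fin d) (Fin d) ℂ) + X := by
    rw [hcomb ev, ← hspec]
  have hXd : X = U * Matrix.diagonal (fun i => (((ev i - t₀ : ℝ)) : ℂ)) * star U := by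
    have h0 : X = (t₀ • (1 : Matrix (Fin d) (Fin d) ℂ) + X)
        - t₀ • (1 : Matrix (Fin d) (Fin d) ℂ) := by abel
    have h1 : t₀ • (1 : Matrix (Fin d) (Fin d) ℂ)
        = U * Matrix.diagonal (fun _ : Fin d => ((t₀ : ℝ) : ℂ)) * star U := by
      have h2 : Matrix.diagonal (fun _ : Fin d => ((t₀ : ℝ) : ℂ))
          = t₀ • (1 : Matrix (Fin d) (Fin d) ℂ) := by
        ext i j
        by_cases h : i = j <;>
          simp [Matrix.diagonal_apply, Matrix.one_apply, Complex.real_smul, h]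
      rw [h2, Matrix.mul_smul, Matrix.smul_mul, Matrix.mul_one, hUU]
    rw [h0, hspec, h1, ← Matrix.sub_mul, ← Matrix.mul_sub]
    congr 2
    ext i j
    by_cases h : i = j <;>
      simp [Matrix.sub_apply, Matrix.diagonal_apply, h]
  have hsUZ : ∀ Z : Matrix (Fin d) (Fin d) ℂ, star U * (U * Z) = Z := by
    intro Z
    rw [← Matrix.mul_assoc, hUU', Matrix.one_mul]
  have hXX : X * X = ∑ k, ((ev k - t₀)^2) • πs k := by
    rw [hcomb (fun k => (ev k - t₀)^2), hXd]
    simp only [Matrix.mul_assoc]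
    rw [hsUZ]
    congr 1
    rw [← Matrix.mul_assoc, Matrix.diagonal_mul_diagonal]
    congr 1
    ext i j
    by_cases h : i = j <;>
      simp [Matrix.diagonal_apply, h, pow_two, Complex.ofReal_mul]
  have hMSE : ∑ k, (ev k - t₀)^2 * ((ρ * πs k).trace).re = K := by
    calc ∑ k, (ev k - t₀)^2 * ((ρ * πs k).trace).re
        = ((ρ * ∑ k, ((ev k - t₀)^2) • πs k).trace).re := by
          rw [Matrix.mul_sum, Matrix.trace_sum, Complex.re_sum]
          refine (Finset.sum_congr rfl fun k _ => ?_).symm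
          rw [Matrix.mul_smul, Matrix.trace_smul, Complex.real_smul, Complex.re_ofReal_mul]
      _ = ((ρ * X * X).trace).re := by rw [← hXX, Matrix.mul_assoc]
      _ = K := by rw [hb4]; simp
  refine ⟨?_, ⟨hFh, hb2, hb3, hb4⟩, ?_, ?_⟩
  · intro Ω inst π g hPOVM h1 h2
    exact hbound Ω inst π g hPOVM.1 hPOVM.2 h1 h2
  · exact ⟨Fin d, inferInstance, πs, ev, ⟨hπpsd, hπsum⟩,
      by rw [hF2]; exact hb2, fun i => by rw [hF2]; exact hb3 i, hMSE.symm⟩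
  · rintro x ⟨Ω, inst, π, g, hPOVM, h1, h2, rfl⟩
    exact hbound Ω inst π g hPOVM.1 hPOVM.2 h1 h2
end
end

section
/- Fix a strictly positive d×d density matrix ρ, Hermitian L₁,…,Lₙ with Tr(ρLᵢ) = 0 and invertible Gram matrix G = [Re Tr(ρLᵢLⱼ)] with inverse [g^{ij}], and c ∈ ℝⁿ. Let U = [uᵏᵢ] ∈ ℝ^{n×n} be invertible with inverse W = [wⁱₖ], let (p₁,…,pₙ) be a probability vector with all pₖ > 0, and let γ = [γᵏⁱ] be reals with Σₖ pₖγₖⁱ = cⁱ for every i. Set Lⁱ := Σⱼ g^{ij}Lⱼ and Xᵏ := Σᵢ uᵏᵢ Lⁱ, with spectral decomposition Xᵏ = Σ_r xᵏ_r πᵏ_r. Define the estimator Π with outcome set of pairs (k,r), POVM π_{(k,r)} := pₖπᵏ_r, and estimate fⁱ(k, x) := γₖⁱ + (wⁱₖ/pₖ)x evaluated at x = xᵏ_r. Then: (1) Π is locally unbiased, i.e. Aⁱ := Σ_{k,r} fⁱ(k, xᵏ_r)π_{(k,r)} satisfies Tr(ρAⁱ) = cⁱ and Re Tr(ρLⱼAⁱ)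 = δⁱⱼ (indeed Aⁱ = cⁱ·I + Lⁱ); and (2) for every k, with V(Π) := [Σ_{(l,r)} (fⁱ(l,xˡ_r) − cⁱ)(fʲ(l,xˡ_r) − cʲ)Tr(ρπ_{(l,r)})] and uᵏ the k-th row of U: (uᵏ)ᵀV(Π)uᵏ = (1/pₖ)(uᵏ)ᵀG⁻¹uᵏ + Σ_l p_l (aᵏ_l)², where aᵏ_l := Σᵢ uᵏᵢ(γ_lⁱ − cⁱ). -/
open Matrix
open scoped ComplexOrder

noncomputable section

/-- The randomized estimator built from the observables
`Xᵏ = Σᵢ uᵏᵢ Lⁱ` (Lemma on the estimator `Π = (π, f)`): it is locally unbiased, and its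
variance satisfies `(uᵏ)ᵀV(Π)uᵏ = (1/pₖ)(uᵏ)ᵀG⁻¹uᵏ + Σₗ pₗ(aᵏₗ)²`. -/
theorem randomized_estimator_lemma (d n : ℕ)
    (ρ : Matrix (Fin d) (Fin d) ℂ) (hρ : ρ.PosDef) (htr : ρ.trace = 1)
    (L : Fin n → Matrix (Fin d) (Fin d) ℂ) (hL : ∀ i, (L i).IsHermitian)
    (hL0 : ∀ i, (ρ * L i).trace = 0)
    (G : Matrix (Fin n) (Fin n) ℝ)
    (hG : ∀ i j, G i j = (Matrix.trace (ρ * L i * L j)).re)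
    (hGinv : IsUnit G.det)
    (c : Fin n → ℝ)
    (U W : Matrix (Fin n) (Fin n) ℝ) (hUW : U * W = 1) (hWU : W * U = 1)
    (p : Fin n → ℝ) (hp : ∀ k, 0 < p k) (hpsum : ∑ k, p k = 1)
    (γ : Fin n → Fin n → ℝ) (hγ : ∀ i, ∑ k, p k * γ k i = c i)
    -- spectral decompositions `Xᵏ = Σ_r xᵏ_r πᵏ_r` of the observables `Xᵏ = Σᵢ uᵏᵢ Lⁱ`
    (R : Type) (_ : Fintype R) (x : Fin n → R → ℝ)
    (Pj : Fin n → R → Matrix (Fin d) (Fin d) ℂ)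
    (hPjherm : ∀ k r, (Pj k r).IsHermitian)
    (hPjidem : ∀ k r, Pj k r * Pj k r = Pj k r)
    (hPjorth : ∀ k r s, r ≠ s → Pj k r * Pj k s = 0)
    (hPjsum : ∀ k, ∑ r, Pj k r = 1)
    (hPjspec : ∀ k, (∑ i, U k i • ∑ j, G⁻¹ i j • L j) = ∑ r, (x k r : ℝ) • Pj k r) :
    -- the POVM `π_{(k,r)} = pₖ πᵏ_r` of the randomized measurement
    IsPOVM (fun q : Fin n × R => p q.1 • Pj q.1 q.2) ∧
    -- (1) local unbiasedness: `Aⁱ = cⁱI + Lⁱ`, `Tr(ρAⁱ) = cⁱ`, `Re Tr(ρLⱼAⁱ) = δⁱⱼ`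
    (∀ i, (∑ q : Fin n × R, (γ q.1 i + (W i q.1 / p q.1) * x q.1 q.2) •
            (p q.1 • Pj q.1 q.2)) =
          c i • (1 : Matrix (Fin d) (Fin d) ℂ) + ∑ j, G⁻¹ i j • L j) ∧
    (∀ i, Matrix.trace (ρ * ∑ q : Fin n × R,
        (γ q.1 i + (W i q.1 / p q.1) * x q.1 q.2) • (p q.1 • Pj q.1 q.2)) = (c i : ℂ)) ∧
    (∀ i j, (Matrix.trace (ρ * L j * ∑ q : Fin n × R,
        (γ q.1 i + (W i q.1 / p q.1) * x q.1 q.2) • (p q.1 • Pj q.1 q.2))).re =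
      if i = j then (1 : ℝ) else 0) ∧
    -- (2) the variance identity for each `k`
    (∀ k, (∑ i, ∑ j, U k i *
        (∑ q : Fin n × R,
          ((γ q.1 i + (W i q.1 / p q.1) * x q.1 q.2) - c i) *
          ((γ q.1 j + (W j q.1 / p q.1) * x q.1 q.2) - c j) *
          (Matrix.trace (ρ * (p q.1 • Pj q.1 q.2))).re) * U k j) =
      (1 / p k) * (∑ i, ∑ j, U k i * G⁻¹ i j * U k j) +
        ∑ l, p l * (∑ i, U k i * (γ l i - c i))^2) := by

  classical
  -- symmetry of G
  have hGsym : ∀ a b, G a b = G b a := by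
    intro a b
    rw [hG, hG]
    have h1 : (ρ * L a * L b)ᴴ = L b * L a * ρ := by
      rw [conjTranspose_mul, conjTranspose_mul, (hL a).eq, (hL b).eq, hρ.1.eq, mul_assoc]
    have h2 : Matrix.trace (L b * L a * ρ) = Matrix.trace (ρ * L b * L a) := by
      rw [trace_mul_comm, ← mul_assoc]
    have h3 : Matrix.trace (ρ * L b * L a) = star (Matrix.trace (ρ * L a * L b)) := by
      rw [← h2, ← h1, trace_conjTranspose]
    rw [h3]
    simp
  -- the operators A^i
  have hA : ∀ i, (∑ q : Fin n × R, (γ q.1 i + (W i q.1 / p q.1) * x q.1 q.2) •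
            (p q.1 • Pj q.1 q.2)) =
          c i • (1 : Matrix (Fin d) (Fin d) ℂ) + ∑ j, G⁻¹ i j • L j := by
    intro i
    rw [Fintype.sum_prod_type]
    have step : ∀ k, ∑ r, (γ k i + (W i k / p k) * x k r) • (p k • Pj k r)
        = (p k * γ k i) • (1 : Matrix (Fin d) (Fin d) ℂ) + W i k • ∑ r, (x k r : ℝ) • Pj k r := by
      intro k
      rw [← hPjsum k, Finset.smul_sum, Finset.smul_sum, ← Finset.sum_add_distrib]
      refine Finset.sum_congr rfl fun r _ => ?_
      rw [smul_smul, smul_smul, ← add_smul]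
      congr 1
      field_simp [(hp k).ne']
    rw [Finset.sum_congr rfl fun k _ => step k, Finset.sum_add_distrib,
      ← Finset.sum_smul, hγ]
    congr 1
    have h1 : ∀ k, W i k • (∑ r, (x k r : ℝ) • Pj k r)
        = ∑ m, (W i k * U k m) • ∑ j, G⁻¹ m j • L j := by
      intro k
      rw [← hPjspec k, Finset.smul_sum]
      exact Finset.sum_congr rfl fun m _ => (smul_smul _ _ _)
    have h2 : ∀ m, ∑ k, (W i k * U k m) • (∑ j, G⁻¹ m j • L j)
        = ((W * U) i m) • (∑ j, G⁻¹ m j • L j) := by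
      intro m
      rw [← Finset.sum_smul, Matrix.mul_apply]
    rw [Finset.sum_congr rfl fun k _ => h1 k, Finset.sum_comm,
      Finset.sum_congr rfl fun m _ => h2 m, hWU]
    simp [Matrix.one_apply, ite_smul]
  refine ⟨⟨?_, ?_⟩, hA, ?_, ?_, ?_⟩
  · -- positive semidefiniteness
    intro ω
    show Matrix.PosSemidef (p ω.1 • Pj ω.1 ω.2)
    have hpsd : (Pj ω.1 ω.2).PosSemidef := by
      have h : Pj ω.1 ω.2 = (Pj ω.1 ω.2)ᴴ * Pj ω.1 ω.2 := by
        rw [(hPjherm ω.1 ω.2).eq, hPjidem]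
      rw [h]; exact posSemidef_conjTranspose_mul_self _
    have hsm : p ω.1 • Pj ω.1 ω.2 = (p ω.1 : ℂ) • Pj ω.1 ω.2 := by
      ext i j; simp [Complex.real_smul]
    rw [hsm]
    constructor
    · unfold Matrix.IsHermitian
      rw [conjTranspose_smul, hpsd.1.eq]
      norm_num
    · intro v
      exact (hpsd.smul (show (0:ℂ) ≤ (p ω.1 : ℂ) by exact_mod_cast (hp ω.1).le)).2 v
  · -- sums to the identity
    show (∑ ω : Fin n × R, p ω.1 • Pj ω.1 ω.2) = 1
    rw [Fintype.sum_prod_type]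
    have h : ∀ k, ∑ r, p k • Pj k r = p k • (1 : Matrix (Fin d) (Fin d) ℂ) := by
      intro k; rw [← Finset.smul_sum, hPjsum]
    rw [Finset.sum_congr rfl fun k _ => h k, ← Finset.sum_smul, hpsum, one_smul]
  · -- unbiasedness (trace)
    intro i
    rw [hA i]
    simp [Matrix.mul_add, Finset.mul_sum, Matrix.mul_smul, Matrix.trace_smul,
      Matrix.trace_sum, hL0, htr, Complex.real_smul]
  · -- local unbiasedness (derivative condition)
    intro i j
    rw [hA i]
    have expand : ρ * L j * (c i • (1 : Matrix (Fin d) (Fin d) ℂ) + ∑ m, G⁻¹ i m • L m)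
        = c i • (ρ * L j) + ∑ m, G⁻¹ i m • (ρ * L j * L m) := by
      rw [Matrix.mul_add, Finset.mul_sum]
      congr 1
      · rw [Matrix.mul_smul, Matrix.mul_one]
      · exact Finset.sum_congr rfl fun m _ => Matrix.mul_smul _ _ _
    rw [expand, trace_add, trace_smul, trace_sum]
    simp only [hL0, smul_zero, zero_add, trace_smul, Complex.add_re, Complex.re_sum,
      Complex.real_smul, Complex.re_ofReal_mul]
    have h5 : ∀ m, G⁻¹ i m * (Matrix.trace (ρ * L j * L m)).re = G⁻¹ i m * G m j := by
      intro m; rw [← hG, hGsym]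
    rw [Finset.sum_congr rfl fun m _ => h5 m]
    have hmulinv := Matrix.nonsing_inv_mul G hGinv
    calc ∑ m, G⁻¹ i m * G m j = (G⁻¹ * G) i j := (Matrix.mul_apply).symm
      _ = _ := by rw [hmulinv, Matrix.one_apply]
  · -- the variance identity
    classical
    intro k
    -- abbreviations
    set t : Fin n → R → ℝ := fun l r => (Matrix.trace (ρ * Pj l r)).re with ht
    set a : Fin n → ℝ := fun l => ∑ i, U k i * (γ l i - c i) with ha
    set Q : Fin n → ℝ := fun l => ∑ r, (x l r)^2 * t l r with hQ
    set F : Fin n → Fin n × R → ℝ :=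
      fun i q => (γ q.1 i + (W i q.1 / p q.1) * x q.1 q.2) - c i with hF
    -- trace of smul
    have hT : ∀ q : Fin n × R, (Matrix.trace (ρ * (p q.1 • Pj q.1 q.2))).re
        = p q.1 * t q.1 q.2 := by
      intro q
      rw [Matrix.mul_smul, trace_smul]
      simp [Complex.real_smul, Complex.re_ofReal_mul, ht]
    -- basic trace sums
    have ht1 : ∀ l, ∑ r, t l r = 1 := by
      intro l
      rw [ht]
      rw [← Complex.re_sum, ← trace_sum, ← Finset.mul_sum, hPjsum, Matrix.mul_one, htr]
      simp
    have hXtr : ∀ l, Matrix.trace (ρ * ∑ r, (x l r : ℝ) • Pj l r) = 0 := by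
      intro l
      rw [← hPjspec l]
      simp [Finset.mul_sum, Matrix.mul_smul, Matrix.trace_sum, Matrix.trace_smul, hL0]
    have ht2 : ∀ l, ∑ r, x l r * t l r = 0 := by
      intro l
      have : Matrix.trace (ρ * ∑ r, (x l r : ℝ) • Pj l r)
          = ∑ r, (x l r : ℝ) • Matrix.trace (ρ * Pj l r) := by
        rw [Finset.mul_sum, trace_sum]
        exact Finset.sum_congr rfl fun r _ => by rw [Matrix.mul_smul, trace_smul]
      have h0 := hXtr l
      rw [this] at h0
      have := congrArg Complex.re h0
      rw [Complex.re_sum] at this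
      simpa [Complex.real_smul, Complex.re_ofReal_mul, ht] using this
    -- spectral square
    have hX2 : (∑ r, (x k r : ℝ) • Pj k r) * (∑ s, (x k s : ℝ) • Pj k s)
        = ∑ r, ((x k r)^2 : ℝ) • Pj k r := by
      rw [Finset.sum_mul]
      refine Finset.sum_congr rfl fun r _ => ?_
      rw [Matrix.smul_mul, Finset.mul_sum, Finset.smul_sum]
      have e : ∀ s, (x k r : ℝ) • (Pj k r * ((x k s : ℝ) • Pj k s))
          = if s = r then ((x k r)^2 : ℝ) • Pj k r else 0 := by
        intro s
        by_cases h : s = r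
        · subst h; rw [Matrix.mul_smul, hPjidem, smul_smul]; simp [pow_two]
        · rw [Matrix.mul_smul, hPjorth k r s (fun hh => h hh.symm)]; simp [h]
      rw [Finset.sum_congr rfl fun s _ => e s]
      simp
    -- Gram computation of Q k
    have hmul' : G * G⁻¹ = 1 := Matrix.mul_nonsing_inv G hGinv
    have hGtrans : Gᵀ = G := by ext a b; exact hGsym b a
    have hGinvsym : ∀ a' b', G⁻¹ a' b' = G⁻¹ b' a' := by
      intro a' b'
      have h1 : (G⁻¹)ᵀ = G⁻¹ := by rw [Matrix.transpose_nonsing_inv, hGtrans]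
      calc G⁻¹ a' b' = (G⁻¹)ᵀ b' a' := rfl
        _ = G⁻¹ b' a' := by rw [h1]
    have hprod : ∀ (A B : Matrix (Fin d) (Fin d) ℂ) (u v : ℝ),
        (u • A) * (v • B) = (u*v) • (A*B) := by
      intro A B u v; rw [Matrix.smul_mul, Matrix.mul_smul, smul_smul]
    have hretr : ∀ (u : ℝ) (M : Matrix (Fin d) (Fin d) ℂ),
        (Matrix.trace (ρ * (u • M))).re = u * (Matrix.trace (ρ * M)).re := by
      intro u M
      rw [Matrix.mul_smul, trace_smul]
      simp [Complex.real_smul, Complex.re_ofReal_mul]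
    have hLL : ∀ i j, (Matrix.trace (ρ * ((∑ m, G⁻¹ i m • L m) * (∑ m', G⁻¹ j m' • L m')))).re
        = G⁻¹ i j := by
      intro i j
      have expand : ρ * ((∑ m, G⁻¹ i m • L m) * (∑ m', G⁻¹ j m' • L m'))
          = ∑ m, ∑ m', (G⁻¹ i m * G⁻¹ j m') • (ρ * L m * L m') := by
        rw [Finset.sum_mul, Finset.mul_sum]
        refine Finset.sum_congr rfl fun m _ => ?_
        rw [Finset.mul_sum, Finset.mul_sum]
        refine Finset.sum_congr rfl fun m' _ => ?_
        rw [hprod, Matrix.mul_smul, ← mul_assoc]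
      rw [expand, trace_sum]
      simp only [trace_sum, trace_smul, Complex.re_sum, Complex.real_smul, Complex.re_ofReal_mul]
      have e2 : ∀ m m', G⁻¹ i m * G⁻¹ j m' * (Matrix.trace (ρ * L m * L m')).re
          = G⁻¹ i m * (G m m' * G⁻¹ m' j) := by
        intro m m'; rw [← hG, hGinvsym j m']; ring
      rw [Finset.sum_congr rfl fun m _ => Finset.sum_congr rfl fun m' _ => e2 m m']
      have e3 : ∀ m, ∑ m', G⁻¹ i m * (G m m' * G⁻¹ m' j)
          = G⁻¹ i m * ((1 : Matrix (Fin n) (Fin n) ℝ) m j) := by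
        intro m
        rw [← hmul', Matrix.mul_apply, Finset.mul_sum]
      rw [Finset.sum_congr rfl fun m _ => e3 m]
      simp [Matrix.one_apply]
    have hsplit : Matrix.trace (ρ * ((∑ m, U k m • ∑ j, G⁻¹ m j • L j) *
          (∑ m', U k m' • ∑ j', G⁻¹ m' j' • L j')))
        = ∑ i, ∑ j, Matrix.trace (ρ * ((U k i • ∑ m, G⁻¹ i m • L m) *
            (U k j • ∑ m', G⁻¹ j m' • L m'))) := by
      rw [Finset.sum_mul, Finset.mul_sum, trace_sum]
      refine Finset.sum_congr rfl fun i _ => ?_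
      rw [Finset.mul_sum, Finset.mul_sum, trace_sum]
    have hQk : Q k = ∑ i, ∑ j, U k i * G⁻¹ i j * U k j := by
      have e1 : Q k = (Matrix.trace (ρ * ((∑ r, (x k r : ℝ) • Pj k r) *
          (∑ s, (x k s : ℝ) • Pj k s)))).re := by
        simp only [hQ]
        rw [hX2, Finset.mul_sum, trace_sum, Complex.re_sum]
        exact Finset.sum_congr rfl fun r _ => (hretr _ _).symm
      rw [e1, ← hPjspec k, hsplit, Complex.re_sum]
      refine Finset.sum_congr rfl fun i _ => ?_
      rw [Complex.re_sum]
      refine Finset.sum_congr rfl fun j _ => ?_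
      rw [hprod, hretr, hLL]
      ring
    -- the sum-swap identity
    have key : (∑ i, ∑ j, U k i * (∑ q : Fin n × R, F i q * F j q * (p q.1 * t q.1 q.2)) * U k j)
        = ∑ q : Fin n × R, (∑ i, U k i * F i q) * (∑ j, U k j * F j q) * (p q.1 * t q.1 q.2) := by
      have e : ∀ i j, U k i * (∑ q : Fin n × R, F i q * F j q * (p q.1 * t q.1 q.2)) * U k j
          = ∑ q : Fin n × R, (U k i * F i q) * ((U k j * F j q) * (p q.1 * t q.1 q.2)) := by
        intro i j
        rw [Finset.mul_sum, Finset.sum_mul]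
        exact Finset.sum_congr rfl fun q _ => by ring
      simp_rw [e]
      calc ∑ i, ∑ j, ∑ q : Fin n × R, (U k i * F i q) * ((U k j * F j q) * (p q.1 * t q.1 q.2))
          = ∑ i, ∑ q : Fin n × R, ∑ j, (U k i * F i q) * ((U k j * F j q) * (p q.1 * t q.1 q.2)) :=
            Finset.sum_congr rfl fun i _ => Finset.sum_comm
        _ = ∑ q : Fin n × R, ∑ i, ∑ j, (U k i * F i q) * ((U k j * F j q) * (p q.1 * t q.1 q.2)) :=
            Finset.sum_comm
        _ = _ := by
            refine Finset.sum_congr rfl fun q _ => ?_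
            rw [Finset.sum_mul_sum, Finset.sum_mul]
            refine Finset.sum_congr rfl fun i _ => ?_
            rw [Finset.sum_mul]
            exact Finset.sum_congr rfl fun j _ => by ring
    -- the row sums
    have hUWe : ∀ l, ∑ i, U k i * W i l = if k = l then (1:ℝ) else 0 := by
      intro l; rw [← Matrix.mul_apply, hUW, Matrix.one_apply]
    have hsum_i : ∀ q : Fin n × R, ∑ i, U k i * F i q
        = a q.1 + (if k = q.1 then (1:ℝ) else 0) * (x q.1 q.2 / p q.1) := by
      intro q
      have e : ∀ i, U k i * F i q
          = U k i * (γ q.1 i - c i) + (U k i * W i q.1) * (x q.1 q.2 / p q.1) := by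
        intro i
        simp only [hF]
        ring
      rw [Finset.sum_congr rfl fun i _ => e i, Finset.sum_add_distrib, ← Finset.sum_mul, hUWe]
    -- per-l reduction
    have hper : ∀ l, ∑ r, ((a l + (if k = l then (1:ℝ) else 0) * (x l r / p l)) *
          ((a l + (if k = l then (1:ℝ) else 0) * (x l r / p l)) * (p l * t l r)))
        = p l * a l ^ 2 + (if k = l then (1:ℝ) else 0) * (Q l / p l) := by
      intro l
      have hpl := (hp l).ne'
      have e : ∀ r, (a l + (if k = l then (1:ℝ) else 0) * (x l r / p l)) *
            ((a l + (if k = l then (1:ℝ) else 0) * (x l r / p l)) * (p l * t l r))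
          = (p l * a l ^ 2) * t l r + (2 * a l * (if k = l then (1:ℝ) else 0)) * (x l r * t l r)
            + ((if k = l then (1:ℝ) else 0) / p l) * (x l r ^ 2 * t l r) := by
        intro r
        by_cases h : k = l
        · simp only [h, if_pos rfl, ↓reduceIte]
          field_simp
          ring
        · simp [h]
          ring
      rw [Finset.sum_congr rfl fun r _ => e r, Finset.sum_add_distrib, Finset.sum_add_distrib,
        ← Finset.mul_sum, ← Finset.mul_sum, ← Finset.mul_sum, ht1, ht2]
      have : ∑ r, x l r ^ 2 * t l r = Q l := by simp only [hQ]
      rw [this]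
      by_cases h : k = l
      · simp only [h, if_pos rfl, ↓reduceIte]; field_simp; ring
      · simp [h]
    -- assemble
    calc (∑ i, ∑ j, U k i * (∑ q : Fin n × R, F i q * F j q *
            (Matrix.trace (ρ * (p q.1 • Pj q.1 q.2))).re) * U k j)
        = ∑ i, ∑ j, U k i * (∑ q : Fin n × R, F i q * F j q * (p q.1 * t q.1 q.2)) * U k j := by
          refine Finset.sum_congr rfl fun i _ => Finset.sum_congr rfl fun j _ => ?_
          rw [Finset.sum_congr rfl fun q _ => by rw [hT q]]
      _ = ∑ q : Fin n × R, (∑ i, U k i * F i q) * (∑ j, U k j * F j q) * (p q.1 * t q.1 q.2) := key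
      _ = ∑ l, ∑ r, ((a l + (if k = l then (1:ℝ) else 0) * (x l r / p l)) *
            ((a l + (if k = l then (1:ℝ) else 0) * (x l r / p l)) * (p l * t l r))) := by
          rw [Fintype.sum_prod_type]
          refine Finset.sum_congr rfl fun l _ => Finset.sum_congr rfl fun r _ => ?_
          rw [hsum_i (l, r)]
          ring
      _ = ∑ l, (p l * a l ^ 2 + (if k = l then (1:ℝ) else 0) * (Q l / p l)) :=
          Finset.sum_congr rfl fun l _ => hper l
      _ = (∑ l, p l * a l ^ 2) + Q k / p k := by
          rw [Finset.sum_add_distrib]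
          congr 1
          simp [ite_mul]
      _ = (1 / p k) * (∑ i, ∑ j, U k i * G⁻¹ i j * U k j) + ∑ l, p l * (∑ i, U k i * (γ l i - c i))^2 := by
          rw [← hQk]
          have : ∀ l, p l * (∑ i, U k i * (γ l i - c i))^2 = p l * a l ^ 2 := by
            intro l; simp only [ha]
          rw [Finset.sum_congr rfl fun l _ => this l]
          ring
end
end
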